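/- Let q, r, f: ℝ → ℂ be Schwartz functions. Then d/dθ |_{θ=0} ∫_ℝ [ (q)' (r + θf)' + q² (r + θf)² ] dx = ∫_ℝ f · ( -q'' + 2 q² r ) dx. -/

import Mathlib

open MeasureTheory

private lemma schwartz_bdd (g : SchwartzMap ℝ ℂ) : ∃ C, ∀ x, ‖g x‖ ≤ C :=
  ⟨_, fun x => g.norm_le_seminorm ℝ x⟩

private lemma int_bdd_mul (φ : ℝ → ℂ) (hφ : Continuous φ) (hb : ∃ C, ∀ x, ‖φ x‖ ≤ C)
    (g : SchwartzMap ℝ ℂ) : Integrable (fun x => φ x * g x) :=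
  by
  obtain ⟨C, hC⟩ := hb
  exact g.integrable.bdd_mul hφ.aestronglyMeasurable (Filter.Eventually.of_forall hC)

private lemma int_mul2 (u g : SchwartzMap ℝ ℂ) : Integrable (fun x => u x * g x) :=
  int_bdd_mul (⇑u) u.continuous (schwartz_bdd u) g

private lemma int_sq_mul (u v g : SchwartzMap ℝ ℂ) :
    Integrable (fun x => (u x) ^ 2 * v x * g x) := by
  refine int_bdd_mul (fun x => (u x) ^ 2 * v x) ((u.continuous.pow 2).mul v.continuous) ?_ g
  obtain ⟨Cu, hCu⟩ := schwartz_bdd u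
  obtain ⟨Cv, hCv⟩ := schwartz_bdd v
  have hu0 : (0:ℝ) ≤ Cu := le_trans (norm_nonneg _) (hCu 0)
  refine ⟨Cu ^ 2 * Cv, fun x => ?_⟩
  rw [norm_mul, norm_pow]
  exact mul_le_mul (pow_le_pow_left₀ (norm_nonneg _) (hCu x) 2) (hCv x) (norm_nonneg _)
    (pow_nonneg hu0 2)

theorem NLS_functional_derivative (q r f : SchwartzMap ℝ ℂ) :
    HasDerivAt
      (fun θ : ℝ => ∫ x : ℝ,
        (deriv (⇑q) x * deriv (fun y => r y + (θ : ℂ) * f y) x +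
          (q x) ^ 2 * (r x + (θ : ℂ) * f x) ^ 2))
      (∫ x : ℝ, f x * (-(deriv^[2] (⇑q) x) + 2 * (q x) ^ 2 * r x)) 0 := by
  set q' : SchwartzMap ℝ ℂ := SchwartzMap.derivCLM ℝ ℂ q with hq'
  set q'' : SchwartzMap ℝ ℂ := SchwartzMap.derivCLM ℝ ℂ q' with hq''
  set r' : SchwartzMap ℝ ℂ := SchwartzMap.derivCLM ℝ ℂ r with hr'
  set f' : SchwartzMap ℝ ℂ := SchwartzMap.derivCLM ℝ ℂ f with hf'
  have hq's : ∀ x, deriv (⇑q) x = q' x := fun x => rfl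
  have hq''s : ∀ x, deriv (⇑q') x = q'' x := fun x => rfl
  -- derivative of r + θ f
  have hderiv : ∀ (θ : ℝ) (x : ℝ),
      deriv (fun y => r y + (θ : ℂ) * f y) x = r' x + (θ : ℂ) * f' x := by
    intro θ x
    have hr : HasDerivAt (⇑r) (r' x) x := r.differentiableAt.hasDerivAt
    have hf : HasDerivAt (⇑f) (f' x) x := f.differentiableAt.hasDerivAt
    exact (hr.add (hf.const_mul _)).deriv
  -- integrability of the pieces
  have hA : Integrable (fun x => q' x * r' x + (q x) ^ 2 * (r x) ^ 2) := by
    refine (int_mul2 q' r').add ?_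
    have h := int_sq_mul q r r
    have he : (fun x => (q x) ^ 2 * (r x) ^ 2) = fun x => (q x) ^ 2 * r x * r x := by
      funext x; ring
    rw [he]; exact h
  have h2qrf : Integrable (fun x => 2 * (q x) ^ 2 * r x * f x) := by
    have h := (int_sq_mul q r f).const_mul (2:ℂ)
    have he : (fun x => 2 * (q x) ^ 2 * r x * f x) =
        fun x => (2:ℂ) * ((q x) ^ 2 * r x * f x) := by funext x; ring
    rw [he]; exact h
  have hB : Integrable (fun x => q' x * f' x + 2 * (q x) ^ 2 * r x * f x) :=
    (int_mul2 q' f').add h2qrf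
  have hC : Integrable (fun x => (q x) ^ 2 * (f x) ^ 2) := by
    have h := int_sq_mul q f f
    have he : (fun x => (q x) ^ 2 * (f x) ^ 2) = fun x => (q x) ^ 2 * f x * f x := by
      funext x; ring
    rw [he]; exact h
  set a : ℂ := ∫ x : ℝ, (q' x * r' x + (q x) ^ 2 * (r x) ^ 2) with ha
  set b : ℂ := ∫ x : ℝ, (q' x * f' x + 2 * (q x) ^ 2 * r x * f x) with hb
  set c : ℂ := ∫ x : ℝ, (q x) ^ 2 * (f x) ^ 2 with hc
  -- the function of θ is the polynomial a + b θ + c θ²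
  have key : (fun θ : ℝ => ∫ x : ℝ,
      (deriv (⇑q) x * deriv (fun y => r y + (θ : ℂ) * f y) x +
        (q x) ^ 2 * (r x + (θ : ℂ) * f x) ^ 2)) =
      fun θ : ℝ => a + (θ : ℂ) * b + (θ : ℂ) * (θ : ℂ) * c := by
    funext θ
    have heq : (fun x : ℝ =>
        deriv (⇑q) x * deriv (fun y => r y + (θ : ℂ) * f y) x +
          (q x) ^ 2 * (r x + (θ : ℂ) * f x) ^ 2) =
        fun x : ℝ => (q' x * r' x + (q x) ^ 2 * (r x) ^ 2) +
          ((θ : ℂ) * (q' x * f' x + 2 * (q x) ^ 2 * r x * f x) +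
            (θ : ℂ) * (θ : ℂ) * ((q x) ^ 2 * (f x) ^ 2)) := by
      funext x
      rw [hderiv θ x, hq's x]
      ring
    have hBC : Integrable (fun x => (θ : ℂ) * (q' x * f' x + 2 * (q x) ^ 2 * r x * f x) +
        (θ : ℂ) * (θ : ℂ) * ((q x) ^ 2 * (f x) ^ 2)) := (hB.const_mul _).add (hC.const_mul _)
    rw [heq, integral_add hA hBC,
      integral_add (hB.const_mul _) (hC.const_mul _), integral_const_mul, integral_const_mul, ← ha, ← hb, ← hc, add_assoc]
  rw [key]
  -- integration by parts
  have hIBP : ∫ x : ℝ, q' x * f' x = - ∫ x : ℝ, q'' x * f x := by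
    have hu : ∀ x, HasDerivAt (⇑q') (q'' x) x := fun x => q'.differentiableAt.hasDerivAt
    have hv : ∀ x, HasDerivAt (⇑f) (f' x) x := fun x => f.differentiableAt.hasDerivAt
    exact integral_mul_deriv_eq_deriv_mul_of_integrable (fun x _ => hu x) (fun x _ => hv x)
      (int_mul2 q' f') (int_mul2 q'' f) (int_mul2 q' f)
  have htarget : (∫ x : ℝ, f x * (-(deriv^[2] (⇑q) x) + 2 * (q x) ^ 2 * r x)) = b := by
    have h2 : ∀ x : ℝ, deriv^[2] (⇑q) x = q'' x := by
      intro x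
      have h21 : deriv^[2] (⇑q) = deriv (deriv (⇑q)) := by
        rw [show (2:ℕ) = 1 + 1 from rfl, Function.iterate_add_apply, Function.iterate_one]
      rw [h21]
      have h22 : deriv (⇑q) = ⇑q' := rfl
      rw [h22]; exact hq''s x
    have heq2 : (fun x : ℝ => f x * (-(deriv^[2] (⇑q) x) + 2 * (q x) ^ 2 * r x)) =
        fun x : ℝ => -(q'' x * f x) + 2 * (q x) ^ 2 * r x * f x := by
      funext x; rw [h2 x]; ring
    have hneg : Integrable (fun x => -(q'' x * f x)) := (int_mul2 q'' f).neg
    rw [heq2, hb, integral_add hneg h2qrf,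
      integral_add (int_mul2 q' f') h2qrf, integral_neg, hIBP]
  rw [htarget]
  -- derivative of the polynomial
  have h1 : HasDerivAt (fun θ : ℝ => (θ : ℂ)) 1 0 := by
    exact Complex.ofRealCLM.hasDerivAt (x := (0:ℝ))
  have hpoly := ((hasDerivAt_const (0:ℝ) a).add (h1.mul_const b)).add ((h1.mul h1).mul_const c)
  have e : (0 + 1 * b + (1 * ((0:ℝ):ℂ) + ((0:ℝ):ℂ) * 1) * c) = b := by simp
  rw [e] at hpoly
  exact hpoly
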